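/- arXiv:2112.04133 — 8 statements merged into one kernel-verified Lean document; each statement's English description precedes it below -/
import Mathlib

section
/- (Kawashima–Shizuta condition for Ruggeri's first model, key step of Theorem 2.) For every λ ∈ ℝ and every nonzero vector v ∈ ℝ⁶ satisfying (B − λA)v = 0, one has L·v ≠ 0; that is, no eigenvector of B relative to A lies in the kernel of L. -/
private lemma vec6_zero {α : Type*} (a b c d e f : α) :
    (![a, b, c, d, e, f] : Fin 6 → α) 0 = a := rfl
private lemma vec6_one {α : Type*} (a b c d e f : α) :
    (![a, b, c, d, e, f] : Fin 6 → α) 1 = b := rfl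
private lemma vec6_two {α : Type*} (a b c d e f : α) :
    (![a, b, c, d, e, f] : Fin 6 → α) 2 = c := rfl
private lemma vec6_three {α : Type*} (a b c d e f : α) :
    (![a, b, c, d, e, f] : Fin 6 → α) 3 = d := rfl
private lemma vec6_four {α : Type*} (a b c d e f : α) :
    (![a, b, c, d, e, f] : Fin 6 → α) 4 = e := rfl
private lemma vec6_five {α : Type*} (a b c d e f : α) :
    (![a, b, c, d, e, f] : Fin 6 → α) 5 = f := rfl

/-- Kawashima–Shizuta condition for Ruggeri's first model: no eigenvector of
`B` relative to `A` lies in the kernel of the source Jacobian `L`. -/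
theorem kawashima_condition
    (θ pψ τ0 τ1 τ2 η ζ χ : ℝ)
    (hθ : 0 < θ) (hpψ : 0 < pψ) (hτ0 : 0 < τ0) (hτ1 : 0 < τ1) (hτ2 : 0 < τ2)
    (hη : 0 < η) (hζ : 0 < ζ) (hχ : 0 < χ)
    (pψψ pθψ pθθ pθ : ℝ)
    (A B L : Matrix (Fin 6) (Fin 6) ℝ)
    (hA : A = !![θ⁻¹ * pψψ, 0, -pψ + θ * pθψ, 0, 0, 0;
                 0, pψ, 0, 0, 0, 0;
                 -pψ + θ * pθψ, 0, θ * pθθ, 0, 0, 0;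
                 0, 0, 0, τ1 * θ⁻¹ * pψ, 0, 0;
                 0, 0, 0, 0, τ2 * θ⁻¹ * pψ, 0;
                 0, 0, 0, 0, 0, τ0 * θ⁻¹ * pψ])
    (hB : B = !![0, pψ, 0, 0, 0, 0;
                 pψ, 0, θ^2 * pθ, θ, θ, 0;
                 0, θ^2 * pθ, 0, 0, 0, θ^2;
                 0, θ, 0, 0, 0, 0;
                 0, θ, 0, 0, 0, 0;
                 0, 0, θ^2, 0, 0, 0])
    (hL : L = Matrix.diagonal ![0, 0, 0, -1/(2*η), -1/(3*ζ), -1/χ])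
    (lam : ℝ) (v : Fin 6 → ℝ) (hv : v ≠ 0)
    (heig : (B - lam • A).mulVec v = 0) :
    L.mulVec v ≠ 0 := by
  intro hLv
  apply hv
  subst hA hB hL
  have l3 := congrFun hLv 3
  have l4 := congrFun hLv 4
  have l5 := congrFun hLv 5
  simp only [Matrix.mulVec_diagonal, vec6_three, vec6_four, vec6_five,
    Pi.zero_apply] at l3 l4 l5
  have hv3 : v 3 = 0 := by
    have h2η : (-1 : ℝ) / (2 * η) ≠ 0 := by
      simp [ne_of_gt hη]
    exact (mul_eq_zero.mp l3).resolve_left h2η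
  have hv4 : v 4 = 0 := by
    have h3ζ : (-1 : ℝ) / (3 * ζ) ≠ 0 := by
      simp [ne_of_gt hζ]
    exact (mul_eq_zero.mp l4).resolve_left h3ζ
  have hv5 : v 5 = 0 := by
    have hχ' : (-1 : ℝ) / χ ≠ 0 := by
      simp [ne_of_gt hχ]
    exact (mul_eq_zero.mp l5).resolve_left hχ'
  have e1 := congrFun heig 1
  have e3 := congrFun heig 3
  have e5 := congrFun heig 5
  simp only [Matrix.mulVec, dotProduct, Fin.sum_univ_six, Matrix.sub_apply,
    Matrix.smul_apply, smul_eq_mul, Matrix.of_apply, Matrix.cons_val', Matrix.empty_val',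
    vec6_zero, vec6_one, vec6_two, vec6_three, vec6_four, vec6_five,
    Pi.zero_apply, hv3, hv4, hv5] at e1 e3 e5
  have hθ' : θ ≠ 0 := ne_of_gt hθ
  have hv1 : v 1 = 0 := by
    have h : θ * v 1 = 0 := by linarith [e3]
    exact (mul_eq_zero.mp h).resolve_left hθ'
  have hv2 : v 2 = 0 := by
    have h : θ ^ 2 * v 2 = 0 := by rw [hv1] at e5; linarith [e5]
    exact (mul_eq_zero.mp h).resolve_left (pow_ne_zero 2 hθ')
  have hv0 : v 0 = 0 := by
    have h : pψ * v 0 = 0 := by rw [hv1, hv2] at e1; linarith [e1]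
    exact (mul_eq_zero.mp h).resolve_left (ne_of_gt hpψ)
  funext i
  fin_cases i <;> simp [hv0, hv1, hv2, hv3, hv4, hv5]
end

section
/- (Full elimination in the verification of the Kawashima condition.) Suppose v ∈ ℝ⁶ and λ ∈ ℝ satisfy (B − λA)v = 0 and v₄ = v₅ = v₆ = 0. Then v = 0; in the proof, after deducing v₂ = v₃ = 0, the second row of the relation forces p_ψ v₁ = 0, and since p_ψ > 0 one concludes v₁ = 0. -/
/-- Full elimination in the verification of the Kawashima condition:
if `(B - λA)v = 0` and the dissipative components of `v` vanish, then
`v = 0`: after `v₂ = v₃ = 0`, the second row forces `pψ · v₁ = 0`, and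
`pψ > 0` gives `v₁ = 0`. -/
theorem kawashima_full_elimination
    (θ pψ τ0 τ1 τ2 : ℝ)
    (hθ : 0 < θ) (hpψ : 0 < pψ) (hτ0 : 0 < τ0) (hτ1 : 0 < τ1) (hτ2 : 0 < τ2)
    (pψψ pθψ pθθ pθ : ℝ)
    (A B : Matrix (Fin 6) (Fin 6) ℝ)
    (hA : A = !![θ⁻¹ * pψψ, 0, -pψ + θ * pθψ, 0, 0, 0;
                 0, pψ, 0, 0, 0, 0;
                 -pψ + θ * pθψ, 0, θ * pθθ, 0, 0, 0;
                 0, 0, 0, τ1 * θ⁻¹ * pψ, 0, 0;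
                 0, 0, 0, 0, τ2 * θ⁻¹ * pψ, 0;
                 0, 0, 0, 0, 0, τ0 * θ⁻¹ * pψ])
    (hB : B = !![0, pψ, 0, 0, 0, 0;
                 pψ, 0, θ^2 * pθ, θ, θ, 0;
                 0, θ^2 * pθ, 0, 0, 0, θ^2;
                 0, θ, 0, 0, 0, 0;
                 0, θ, 0, 0, 0, 0;
                 0, 0, θ^2, 0, 0, 0])
    (lam : ℝ) (v : Fin 6 → ℝ)
    (heig : (B - lam • A).mulVec v = 0)
    (h4 : v 3 = 0) (h5 : v 4 = 0) (h6 : v 5 = 0) :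
    v = 0 := by
  subst hA hB
  have r3 := congrFun heig 3
  have r5 := congrFun heig (Fin.succ 4)
  have r1 := congrFun heig 1
  simp [Matrix.mulVec, dotProduct, Fin.sum_univ_six, Matrix.cons_val_succ,
    h4, h5, h6] at r3 r5 r1
  have hv1 : v 1 = 0 := r3.resolve_left hθ.ne'
  have hv2 : v 2 = 0 := r5.resolve_left hθ.ne'
  have hv0 : v 0 = 0 := by
    rw [hv1, hv2] at r1
    have : pψ * v 0 = 0 := by linarith
    exact (mul_eq_zero.mp this).resolve_left hpψ.ne'
  funext i
  fin_cases i <;> simp [hv0, hv1, hv2, h4, h5, h6]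
end

section
/- (Derivative of the temporal Godunov–Boillat potential with respect to ũ.) At every state Υ with θ̃ < 0, the gradient of X⁰ with respect to the vector variable ũ ∈ ℝ³ equals p̂_ψ(θ, ψ(Υ)) · ũ (which equals ρu with u = θũ, by the identity p̂_ψ = ρθ). -/
noncomputable section

/-- The extended thermodynamical potential
`ψ(Υ) = ψ̃ + ½θ|ũ|² + ½τ₁‖Σ̃‖² + ½τ₂σ̃² + ½τ₀|q̃|²` with `θ = -1/θ̃`. -/
def psiVal (τ0 τ1 τ2 : ℝ) (ψt : ℝ) (ut : Fin 3 → ℝ) (θt : ℝ)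
    (St : Matrix (Fin 3) (Fin 3) ℝ) (σt : ℝ) (qt : Fin 3 → ℝ) : ℝ :=
  ψt + (1/2) * (-1/θt) * (∑ i, (ut i)^2) + (1/2) * τ1 * (∑ j, ∑ k, (St j k)^2)
    + (1/2) * τ2 * σt^2 + (1/2) * τ0 * (∑ i, (qt i)^2)

/-- The temporal Godunov–Boillat potential `X⁰(Υ) = p̂(θ, ψ(Υ))/θ`, `θ = -1/θ̃`. -/
def X0 (phat : ℝ × ℝ → ℝ) (τ0 τ1 τ2 : ℝ) (ψt : ℝ) (ut : Fin 3 → ℝ) (θt : ℝ)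
    (St : Matrix (Fin 3) (Fin 3) ℝ) (σt : ℝ) (qt : Fin 3 → ℝ) : ℝ :=
  phat (-1/θt, psiVal τ0 τ1 τ2 ψt ut θt St σt qt) / (-1/θt)

/-- The spatial Godunov–Boillat potential
`X¹(Υ) = p̂(θ, ψ(Υ)) ũ₁ + θ((Σ̃ũ)₁ + σ̃ũ₁ + q̃₁)`, `θ = -1/θ̃`. -/
def X1 (phat : ℝ × ℝ → ℝ) (τ0 τ1 τ2 : ℝ) (ψt : ℝ) (ut : Fin 3 → ℝ) (θt : ℝ)
    (St : Matrix (Fin 3) (Fin 3) ℝ) (σt : ℝ) (qt : Fin 3 → ℝ) : ℝ :=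
  phat (-1/θt, psiVal τ0 τ1 τ2 ψt ut θt St σt qt) * ut 0
    + (-1/θt) * ((∑ j, St 0 j * ut j) + σt * ut 0 + qt 0)

/-- Partial derivative `p̂_ψ` of `p̂` with respect to its second slot. -/
def pPsi (phat : ℝ × ℝ → ℝ) (a b : ℝ) : ℝ := deriv (fun s => phat (a, s)) b

/-- Partial derivative `p̂_θ` of `p̂` with respect to its first slot. -/
def pTheta (phat : ℝ × ℝ → ℝ) (a b : ℝ) : ℝ := deriv (fun t => phat (t, b)) a


/-- Derivative of the temporal Godunov–Boillat potential with respect to `ũ`: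
componentwise, `∂X⁰/∂ũ_k = p̂_ψ(θ, ψ(Υ)) · ũ_k` at every state with `θ̃ < 0`. -/
theorem X0_deriv_uTilde
    (phat : ℝ × ℝ → ℝ) (hp : ContDiff ℝ 2 phat)
    (τ0 τ1 τ2 : ℝ) (hτ0 : 0 < τ0) (hτ1 : 0 < τ1) (hτ2 : 0 < τ2)
    (ψt : ℝ) (ut : Fin 3 → ℝ) (θt : ℝ) (St : Matrix (Fin 3) (Fin 3) ℝ)
    (σt : ℝ) (qt : Fin 3 → ℝ) (hθ : θt < 0) :
    ∀ k : Fin 3,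
      HasDerivAt (fun s => X0 phat τ0 τ1 τ2 ψt (Function.update ut k s) θt St σt qt)
        (pPsi phat (-1/θt) (psiVal τ0 τ1 τ2 ψt ut θt St σt qt) * ut k) (ut k) := by
  intro k
  have hθ0 : θt ≠ 0 := ne_of_lt hθ
  have ha0 : (-1/θt) ≠ 0 := by
    simp [hθ0]
  set b := psiVal τ0 τ1 τ2 ψt ut θt St σt qt with hb
  -- derivative of the sum of squares
  have hsum : HasDerivAt (fun s => ∑ i, (Function.update ut k s i)^2)
      (2 * ut k) (ut k) := by
    have h : ∀ i ∈ Finset.univ, HasDerivAt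
        (fun s => (Function.update ut k s i)^2)
        (if i = k then 2 * ut k else 0) (ut k) := by
      intro i _
      by_cases h : i = k
      · subst h
        simp only [Function.update_self, if_pos rfl]
        simpa using hasDerivAt_pow 2 (ut i)
      · simp only [Function.update_of_ne h, if_neg h]
        exact hasDerivAt_const _ _
    have := HasDerivAt.fun_sum h
    simpa using this
  -- derivative of psiVal
  have hψ : HasDerivAt
      (fun s => psiVal τ0 τ1 τ2 ψt (Function.update ut k s) θt St σt qt)
      ((-1/θt) * ut k) (ut k) := by
    have h := ((((hsum.const_mul ((1/2) * (-1/θt))).const_add ψt).add_const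
        ((1/2) * τ1 * (∑ j, ∑ k, (St j k)^2))).add_const
        ((1/2) * τ2 * σt^2)).add_const ((1/2) * τ0 * (∑ i, (qt i)^2))
    convert h using 1
    · rfl
    · rfl
    · rfl
    ring
  have hψval : psiVal τ0 τ1 τ2 ψt (Function.update ut k (ut k)) θt St σt qt = b := by
    rw [Function.update_eq_self]
  -- derivative of phat in second slot
  have hdiff : DifferentiableAt ℝ (fun t => phat (-1/θt, t)) b := by
    have hd : Differentiable ℝ phat := hp.differentiable (by norm_num)
    exact (hd.comp ((differentiable_const (-1/θt)).prodMk differentiable_id)).differentiableAt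
  have hphat : HasDerivAt (fun t => phat (-1/θt, t)) (pPsi phat (-1/θt) b) b := by
    rw [pPsi]; exact hdiff.hasDerivAt
  have hphat' : HasDerivAt (fun t => phat (-1/θt, t)) (pPsi phat (-1/θt) b)
      (psiVal τ0 τ1 τ2 ψt (Function.update ut k (ut k)) θt St σt qt) := by
    rw [hψval]; exact hphat
  have hcomp : HasDerivAt
      (fun s => phat (-1/θt, psiVal τ0 τ1 τ2 ψt (Function.update ut k s) θt St σt qt))
      (pPsi phat (-1/θt) b * ((-1/θt) * ut k)) (ut k) := by
    have := hphat'.comp (ut k) hψ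
    simpa [Function.comp_def] using this
  have hfinal := hcomp.div_const (-1/θt)
  have : pPsi phat (-1/θt) b * ((-1/θt) * ut k) / (-1/θt)
      = pPsi phat (-1/θt) b * ut k := by
    field_simp
  rw [this] at hfinal
  simpa only [X0] using hfinal

end
end

section
/- (Derivative of the temporal Godunov–Boillat potential with respect to θ̃.) At every state Υ with θ̃ < 0, the partial derivative of X⁰ with respect to the scalar variable θ̃ equals −p̂(θ, ψ(Υ)) + θ·p̂_θ(θ, ψ(Υ)) + ½θ|ũ|²·p̂_ψ(θ, ψ(Υ)) (which equals the total energy density ρe + ½ρ|u|² under the thermodynamic identities p̂_ψ = ρθ and θp̂_θ = ρe + p). -/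
noncomputable section

/-- Derivative of the temporal Godunov–Boillat potential with respect to `θ̃`:
`∂X⁰/∂θ̃ = -p̂(θ, ψ(Υ)) + θ·p̂_θ(θ, ψ(Υ)) + ½θ|ũ|²·p̂_ψ(θ, ψ(Υ))` at every state
with `θ̃ < 0`. -/
theorem X0_deriv_thetaTilde
    (phat : ℝ × ℝ → ℝ) (hp : ContDiff ℝ 2 phat)
    (τ0 τ1 τ2 : ℝ) (hτ0 : 0 < τ0) (hτ1 : 0 < τ1) (hτ2 : 0 < τ2)
    (ψt : ℝ) (ut : Fin 3 → ℝ) (θt : ℝ) (St : Matrix (Fin 3) (Fin 3) ℝ)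
    (σt : ℝ) (qt : Fin 3 → ℝ) (hθ : θt < 0) :
    HasDerivAt (fun s => X0 phat τ0 τ1 τ2 ψt ut s St σt qt)
      (-phat (-1/θt, psiVal τ0 τ1 τ2 ψt ut θt St σt qt)
        + (-1/θt) * pTheta phat (-1/θt) (psiVal τ0 τ1 τ2 ψt ut θt St σt qt)
        + (1/2) * (-1/θt) * (∑ i, (ut i)^2)
            * pPsi phat (-1/θt) (psiVal τ0 τ1 τ2 ψt ut θt St σt qt)) θt := by
  have hθ' : θt ≠ 0 := ne_of_lt hθ
  set a : ℝ := -1/θt with ha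
  set b : ℝ := psiVal τ0 τ1 τ2 ψt ut θt St σt qt with hb
  set U : ℝ := ∑ i, (ut i)^2 with hU
  have hinv : HasDerivAt (fun s : ℝ => -1/s) ((θt^2)⁻¹) θt := by
    simpa [neg_div, one_div] using (hasDerivAt_inv hθ').fun_neg
  have hpsi : HasDerivAt (fun s => psiVal τ0 τ1 τ2 ψt ut s St σt qt)
      ((1/2) * (θt^2)⁻¹ * U) θt := by
    unfold psiVal
    exact ((((hinv.const_mul (1/2 : ℝ)).mul_const U).const_add ψt).add_const
      _).add_const _ |>.add_const _
  have hc : HasDerivAt (fun s : ℝ => ((-1/s : ℝ), psiVal τ0 τ1 τ2 ψt ut s St σt qt))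
      ((((θt^2)⁻¹ : ℝ), (1/2) * (θt^2)⁻¹ * U)) θt := HasDerivAt.prodMk hinv hpsi
  have hdiff : DifferentiableAt ℝ phat (a, b) :=
    (hp.differentiable (by norm_num)).differentiableAt
  set L := fderiv ℝ phat (a, b) with hL
  have hfd : HasFDerivAt phat L (a, b) := hdiff.hasFDerivAt
  have hcomp : HasDerivAt (fun s => phat (-1/s, psiVal τ0 τ1 τ2 ψt ut s St σt qt))
      (L (((θt^2)⁻¹ : ℝ), (1/2) * (θt^2)⁻¹ * U)) θt := by
    have := hfd.comp_hasDerivAt θt (by simpa [ha, hb] using hc)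
    simpa [Function.comp_def] using this
  have hT : pTheta phat a b = L ((1 : ℝ), (0 : ℝ)) := by
    have h1 : HasDerivAt (fun t : ℝ => ((t, b) : ℝ × ℝ)) ((1 : ℝ), (0 : ℝ)) a :=
      HasDerivAt.prodMk (hasDerivAt_id a) (hasDerivAt_const a b)
    exact (hfd.comp_hasDerivAt a h1).deriv
  have hP : pPsi phat a b = L ((0 : ℝ), (1 : ℝ)) := by
    have h1 : HasDerivAt (fun s : ℝ => ((a, s) : ℝ × ℝ)) ((0 : ℝ), (1 : ℝ)) b :=
      HasDerivAt.prodMk (hasDerivAt_const b a) (hasDerivAt_id b)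
    exact (hfd.comp_hasDerivAt b h1).deriv
  have hlin : L (((θt^2)⁻¹ : ℝ), (1/2) * (θt^2)⁻¹ * U)
      = (θt^2)⁻¹ * L ((1:ℝ),(0:ℝ)) + ((1/2) * (θt^2)⁻¹ * U) * L ((0:ℝ),(1:ℝ)) := by
    have hv : ((((θt^2)⁻¹ : ℝ), (1/2) * (θt^2)⁻¹ * U) : ℝ × ℝ)
        = (θt^2)⁻¹ • ((1:ℝ),(0:ℝ)) + ((1/2) * (θt^2)⁻¹ * U) • ((0:ℝ),(1:ℝ)) := by
      simp [Prod.ext_iff]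
    rw [hv, map_add, map_smul, map_smul, smul_eq_mul, smul_eq_mul]
  have hfun : (fun s => X0 phat τ0 τ1 τ2 ψt ut s St σt qt)
      = fun s => (-s) * phat (-1/s, psiVal τ0 τ1 τ2 ψt ut s St σt qt) := by
    funext s
    unfold X0
    rcases eq_or_ne s 0 with h | h
    · simp [h]
    · field_simp
  have hprod : HasDerivAt
      (fun s => (-s) * phat (-1/s, psiVal τ0 τ1 τ2 ψt ut s St σt qt))
      ((-1) * phat (a, b) + (-θt) * L (((θt^2)⁻¹ : ℝ), (1/2) * (θt^2)⁻¹ * U)) θt := by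
    have := ((hasDerivAt_id θt).fun_neg).fun_mul hcomp
    simpa [ha, hb] using this
  rw [hfun]
  convert hprod using 1
  rw [hlin, ← hT, ← hP]
  have h1 : (-1:ℝ)/θt = (-θt) * (θt^2)⁻¹ := by
    field_simp
  linear_combination (pTheta phat a b + (1/2) * U * pPsi phat a b) * h1

end
end

section
/- (Derivative of the spatial Godunov–Boillat potential with respect to ũ.) At every state Υ with θ̃ < 0, the gradient of X¹ with respect to the vector variable ũ ∈ ℝ³ is given componentwise, for k = 1, 2, 3, by ∂X¹/∂ũ_k = p̂(θ, ψ(Υ))·δ_{1k} + θ·p̂_ψ(θ, ψ(Υ))·ũ₁ũ_k + θΣ̃_{1k} + θσ̃δ_{1k}. -/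
noncomputable section

lemma sum_update_sq (ut : Fin 3 → ℝ) (k : Fin 3) (s : ℝ) :
    ∑ i, (Function.update ut k s i)^2
      = s^2 + ∑ i ∈ Finset.univ.erase k, (ut i)^2 := by
  rw [← Finset.add_sum_erase _ _ (Finset.mem_univ k)]
  congr 1
  · simp
  · exact Finset.sum_congr rfl fun i hi => by
      rw [Function.update_of_ne (Finset.ne_of_mem_erase hi)]

lemma sum_update_mul (St : Matrix (Fin 3) (Fin 3) ℝ) (ut : Fin 3 → ℝ) (k : Fin 3) (s : ℝ) :
    ∑ j, St 0 j * Function.update ut k s j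
      = St 0 k * s + ∑ j ∈ Finset.univ.erase k, St 0 j * ut j := by
  rw [← Finset.add_sum_erase _ _ (Finset.mem_univ k)]
  congr 1
  · simp
  · exact Finset.sum_congr rfl fun i hi => by
      rw [Function.update_of_ne (Finset.ne_of_mem_erase hi)]

/-- Derivative of the spatial Godunov–Boillat potential with respect to `ũ`:
componentwise, `∂X¹/∂ũ_k = p̂ δ_{1k} + θ p̂_ψ ũ₁ũ_k + θΣ̃_{1k} + θσ̃δ_{1k}`
at every state with `θ̃ < 0`. -/
theorem X1_deriv_uTilde
    (phat : ℝ × ℝ → ℝ) (hp : ContDiff ℝ 2 phat)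
    (τ0 τ1 τ2 : ℝ) (hτ0 : 0 < τ0) (hτ1 : 0 < τ1) (hτ2 : 0 < τ2)
    (ψt : ℝ) (ut : Fin 3 → ℝ) (θt : ℝ) (St : Matrix (Fin 3) (Fin 3) ℝ)
    (σt : ℝ) (qt : Fin 3 → ℝ) (hθ : θt < 0) :
    ∀ k : Fin 3,
      HasDerivAt (fun s => X1 phat τ0 τ1 τ2 ψt (Function.update ut k s) θt St σt qt)
        (phat (-1/θt, psiVal τ0 τ1 τ2 ψt ut θt St σt qt)
            * (if (0 : Fin 3) = k then 1 else 0)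
          + (-1/θt) * pPsi phat (-1/θt) (psiVal τ0 τ1 τ2 ψt ut θt St σt qt)
            * ut 0 * ut k
          + (-1/θt) * St 0 k
          + (-1/θt) * σt * (if (0 : Fin 3) = k then 1 else 0)) (ut k) := by
  intro k
  classical
  have hpd : Differentiable ℝ phat := hp.differentiable (by norm_num)
  have hg : HasDerivAt
      (fun s => psiVal τ0 τ1 τ2 ψt (Function.update ut k s) θt St σt qt)
      ((-1/θt) * ut k) (ut k) := by
    have hfe : (fun s => psiVal τ0 τ1 τ2 ψt (Function.update ut k s) θt St σt qt)
        = fun s => (1/2) * (-1/θt) * s^2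
          + (ψt + (1/2) * (-1/θt) * (∑ i ∈ Finset.univ.erase k, (ut i)^2)
            + (1/2) * τ1 * (∑ j, ∑ k, (St j k)^2) + (1/2) * τ2 * σt^2
            + (1/2) * τ0 * (∑ i, (qt i)^2)) := by
      funext s; simp only [psiVal, sum_update_sq]; ring
    rw [hfe]
    have h := ((hasDerivAt_pow 2 (ut k)).const_mul ((1/2) * (-1/θt))).add_const
      (ψt + (1/2) * (-1/θt) * (∑ i ∈ Finset.univ.erase k, (ut i)^2)
        + (1/2) * τ1 * (∑ j, ∑ k, (St j k)^2) + (1/2) * τ2 * σt^2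
        + (1/2) * τ0 * (∑ i, (qt i)^2))
    refine h.congr_deriv (Eq.symm ?_)
    push_cast; ring
  have hval : psiVal τ0 τ1 τ2 ψt (Function.update ut k (ut k)) θt St σt qt
      = psiVal τ0 τ1 τ2 ψt ut θt St σt qt := by
    rw [Function.update_eq_self]
  have houter : HasDerivAt (fun b => phat (-1/θt, b))
      (pPsi phat (-1/θt) (psiVal τ0 τ1 τ2 ψt ut θt St σt qt))
      (psiVal τ0 τ1 τ2 ψt (Function.update ut k (ut k)) θt St σt qt) := by
    rw [hval]
    have hd : DifferentiableAt ℝ (fun b => phat (-1/θt, b))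
        (psiVal τ0 τ1 τ2 ψt ut θt St σt qt) :=
      (hpd.comp ((differentiable_const (-1/θt)).prodMk differentiable_id)).differentiableAt
    simpa [pPsi] using hd.hasDerivAt
  have hcomp : HasDerivAt
      (fun s => phat (-1/θt, psiVal τ0 τ1 τ2 ψt (Function.update ut k s) θt St σt qt))
      (pPsi phat (-1/θt) (psiVal τ0 τ1 τ2 ψt ut θt St σt qt) * ((-1/θt) * ut k))
      (ut k) := by exact houter.comp (ut k) hg
  by_cases h0 : (0 : Fin 3) = k
  · subst h0
    have hfe : (fun s => X1 phat τ0 τ1 τ2 ψt (Function.update ut 0 s) θt St σt qt)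
        = fun s =>
          phat (-1/θt, psiVal τ0 τ1 τ2 ψt (Function.update ut 0 s) θt St σt qt) * s
          + (((-1/θt) * (St 0 0 + σt)) * s
            + (-1/θt) * ((∑ j ∈ Finset.univ.erase 0, St 0 j * ut j) + qt 0)) := by
      funext s
      simp only [X1, sum_update_mul, Function.update_self]
      ring
    rw [hfe]
    have h := (hcomp.mul (hasDerivAt_id (ut 0))).add
      (((hasDerivAt_id (ut 0)).const_mul ((-1/θt) * (St 0 0 + σt))).add_const
        ((-1/θt) * ((∑ j ∈ Finset.univ.erase 0, St 0 j * ut j) + qt 0)))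
    refine h.congr_deriv (Eq.symm ?_)
    rw [hval]
    simp only [if_pos rfl, id_eq, if_true]
    ring
  · have hne : ∀ s : ℝ, Function.update ut k s 0 = ut 0 := fun s =>
      Function.update_of_ne h0 s ut
    have hfe : (fun s => X1 phat τ0 τ1 τ2 ψt (Function.update ut k s) θt St σt qt)
        = fun s =>
          phat (-1/θt, psiVal τ0 τ1 τ2 ψt (Function.update ut k s) θt St σt qt) * ut 0
          + (((-1/θt) * St 0 k) * s
            + (-1/θt) * ((∑ j ∈ Finset.univ.erase k, St 0 j * ut j)
              + σt * ut 0 + qt 0)) := by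
      funext s
      simp only [X1, sum_update_mul, hne]
      ring
    rw [hfe]
    have h := (hcomp.mul_const (ut 0)).add
      (((hasDerivAt_id (ut k)).const_mul ((-1/θt) * St 0 k)).add_const
        ((-1/θt) * ((∑ j ∈ Finset.univ.erase k, St 0 j * ut j) + σt * ut 0 + qt 0)))
    refine h.congr_deriv (Eq.symm ?_)
    simp only [if_neg h0, id_eq]
    ring


end
end

section
/- (Derivative of the spatial Godunov–Boillat potential with respect to θ̃.) At every state Υ with θ̃ < 0, the partial derivative of X¹ with respect to the scalar variable θ̃ equals θ²·[(p̂_θ(θ, ψ(Υ)) + ½p̂_ψ(θ, ψ(Υ))|ũ|²)·ũ₁ + (Σ̃ũ)₁ + σ̃ũ₁ + q̃₁]. -/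
noncomputable section

/-- Derivative of the spatial Godunov–Boillat potential with respect to `θ̃`:
`∂X¹/∂θ̃ = θ²·[(p̂_θ + ½p̂_ψ|ũ|²)ũ₁ + (Σ̃ũ)₁ + σ̃ũ₁ + q̃₁]` at every state with
`θ̃ < 0`. -/
theorem X1_deriv_thetaTilde
    (phat : ℝ × ℝ → ℝ) (hp : ContDiff ℝ 2 phat)
    (τ0 τ1 τ2 : ℝ) (hτ0 : 0 < τ0) (hτ1 : 0 < τ1) (hτ2 : 0 < τ2)
    (ψt : ℝ) (ut : Fin 3 → ℝ) (θt : ℝ) (St : Matrix (Fin 3) (Fin 3) ℝ)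
    (σt : ℝ) (qt : Fin 3 → ℝ) (hθ : θt < 0) :
    HasDerivAt (fun s => X1 phat τ0 τ1 τ2 ψt ut s St σt qt)
      ((-1/θt)^2 *
        ((pTheta phat (-1/θt) (psiVal τ0 τ1 τ2 ψt ut θt St σt qt)
            + (1/2) * pPsi phat (-1/θt) (psiVal τ0 τ1 τ2 ψt ut θt St σt qt)
                * (∑ i, (ut i)^2)) * ut 0
          + (∑ j, St 0 j * ut j) + σt * ut 0 + qt 0)) θt := by
  have hθ0 : θt ≠ 0 := ne_of_lt hθ
  set a : ℝ := -1/θt with ha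
  set b : ℝ := psiVal τ0 τ1 τ2 ψt ut θt St σt qt with hb
  set U : ℝ := ∑ i, (ut i)^2 with hU
  set C : ℝ := (∑ j, St 0 j * ut j) + σt * ut 0 + qt 0 with hC
  set g' : ℝ := (θt^2)⁻¹ with hg'
  -- derivative of s ↦ -1/s at θt
  have hg : HasDerivAt (fun s : ℝ => -1/s) g' θt := by
    have := (hasDerivAt_inv hθ0).neg
    simpa [neg_div, hg', Pi.neg_def] using this
  -- derivative of psiVal in s
  have hψ : HasDerivAt (fun s => psiVal τ0 τ1 τ2 ψt ut s St σt qt)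
      ((1/2) * g' * U) θt := by
    unfold psiVal
    have h1 : HasDerivAt (fun s : ℝ => (1/2) * (-1/s) * U) ((1/2) * g' * U) θt := by
      have := (hg.const_mul (1/2 : ℝ)).mul_const U
      simpa [mul_comm, mul_assoc, mul_left_comm] using this
    simpa [Pi.add_def] using (((((hasDerivAt_const θt ψt).add h1).add
      (hasDerivAt_const θt ((1/2) * τ1 * (∑ j, ∑ k, (St j k)^2)))).add
      (hasDerivAt_const θt ((1/2) * τ2 * σt^2))).add
      (hasDerivAt_const θt ((1/2) * τ0 * (∑ i, (qt i)^2))))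
  -- fderiv of phat
  have hdiff : DifferentiableAt ℝ phat (a, b) :=
    (hp.differentiable (by norm_num)).differentiableAt
  set df := fderiv ℝ phat (a, b) with hdf
  have hF : HasFDerivAt phat df (a, b) := hdiff.hasFDerivAt
  -- curve
  have hcurve : HasDerivAt
      (fun s => ((-1/s : ℝ), psiVal τ0 τ1 τ2 ψt ut s St σt qt)) (g', (1/2) * g' * U) θt :=
    hg.prodMk hψ
  have hcomp : HasDerivAt (fun s => phat (-1/s, psiVal τ0 τ1 τ2 ψt ut s St σt qt))
      (df (g', (1/2) * g' * U)) θt := by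
    have := hF.comp_hasDerivAt θt hcurve
    simpa [Function.comp_def] using this
  -- partial derivatives
  have hpt : pTheta phat a b = df (1, 0) := by
    have h1 : HasDerivAt (fun t : ℝ => phat (t, b)) (df (1, 0)) a := by
      have hc : HasDerivAt (fun t : ℝ => ((t : ℝ), b)) ((1 : ℝ), (0 : ℝ)) a :=
        (hasDerivAt_id a).prodMk (hasDerivAt_const a b)
      simpa [Function.comp_def] using hF.comp_hasDerivAt a hc
    simpa [pTheta] using h1.deriv
  have hpp : pPsi phat a b = df (0, 1) := by
    have h1 : HasDerivAt (fun s : ℝ => phat (a, s)) (df (0, 1)) b := by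
      have hc : HasDerivAt (fun s : ℝ => (a, (s : ℝ))) ((0 : ℝ), (1 : ℝ)) b :=
        (hasDerivAt_const b a).prodMk (hasDerivAt_id b)
      simpa [Function.comp_def] using hF.comp_hasDerivAt b hc
    simpa [pPsi] using h1.deriv
  have hlin : df (g', (1/2) * g' * U) = g' * df (1, 0) + ((1/2) * g' * U) * df (0, 1) := by
    have : (g', (1/2) * g' * U) = g' • ((1 : ℝ), (0 : ℝ)) + ((1/2) * g' * U) • ((0:ℝ), (1:ℝ)) := by
      simp [Prod.ext_iff]
    rw [this, map_add, map_smul, map_smul]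
    simp [smul_eq_mul]
  -- assemble
  have hX : HasDerivAt (fun s => X1 phat τ0 τ1 τ2 ψt ut s St σt qt)
      (df (g', (1/2) * g' * U) * ut 0 + g' * C) θt := by
    unfold X1
    exact (hcomp.mul_const (ut 0)).add (hg.mul_const C)
  convert hX using 1
  rw [hlin, ← hpt, ← hpp]
  have hgsq : a^2 = g' := by
    rw [ha, hg']
    field_simp
  rw [← hgsq, hC]
  ring
end
end

section
/- (Derivatives of the spatial Godunov–Boillat potential with respect to σ̃ and q̃.) At every state Υ with θ̃ < 0: the partial derivative of X¹ with respect to σ̃ equals τ₂·p̂_ψ(θ, ψ(Υ))·σ̃·ũ₁ + θũ₁, and the gradient of X¹ with respect to q̃ ∈ ℝ³ is given componentwise, for k = 1, 2, 3, by ∂X¹/∂q̃_k = τ₀·p̂_ψ(θ, ψ(Υ))·ũ₁·q̃_k + θ·δ_{1k}. -/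
noncomputable section

lemma hasDerivAt_slot2 (phat : ℝ × ℝ → ℝ) (hp : ContDiff ℝ 2 phat) (a b : ℝ) :
    HasDerivAt (fun x => phat (a, x)) (pPsi phat a b) b := by
  have h1 : Differentiable ℝ phat := hp.differentiable (by norm_num)
  have h : DifferentiableAt ℝ (fun x : ℝ => phat (a, x)) b :=
    (h1.comp ((differentiable_const a).prodMk differentiable_id)).differentiableAt
  exact h.hasDerivAt

/-- Derivatives of the spatial Godunov–Boillat potential with respect to `σ̃`
and `q̃`, at every state with `θ̃ < 0`:
`∂X¹/∂σ̃ = τ₂ p̂_ψ σ̃ ũ₁ + θũ₁` and `∂X¹/∂q̃_k = τ₀ p̂_ψ ũ₁ q̃_k + θ δ_{1k}`. -/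
theorem X1_deriv_sigma_q
    (phat : ℝ × ℝ → ℝ) (hp : ContDiff ℝ 2 phat)
    (τ0 τ1 τ2 : ℝ) (hτ0 : 0 < τ0) (hτ1 : 0 < τ1) (hτ2 : 0 < τ2)
    (ψt : ℝ) (ut : Fin 3 → ℝ) (θt : ℝ) (St : Matrix (Fin 3) (Fin 3) ℝ)
    (σt : ℝ) (qt : Fin 3 → ℝ) (hθ : θt < 0) :
    HasDerivAt (fun s => X1 phat τ0 τ1 τ2 ψt ut θt St s qt)
      (τ2 * pPsi phat (-1/θt) (psiVal τ0 τ1 τ2 ψt ut θt St σt qt) * σt * ut 0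
        + (-1/θt) * ut 0) σt
    ∧ (∀ k : Fin 3,
      HasDerivAt (fun s => X1 phat τ0 τ1 τ2 ψt ut θt St σt (Function.update qt k s))
        (τ0 * pPsi phat (-1/θt) (psiVal τ0 τ1 τ2 ψt ut θt St σt qt) * ut 0 * qt k
          + (-1/θt) * (if (0 : Fin 3) = k then 1 else 0)) (qt k)) := by
  set a : ℝ := -1/θt with ha
  set b : ℝ := psiVal τ0 τ1 τ2 ψt ut θt St σt qt with hb
  have hslot := hasDerivAt_slot2 phat hp a b
  constructor
  · -- σ derivative
    have hψ : HasDerivAt (fun s => psiVal τ0 τ1 τ2 ψt ut θt St s qt) (τ2 * σt) σt := by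
      unfold psiVal
      have h2 : HasDerivAt (fun s : ℝ => (1/2) * τ2 * s^2) (τ2 * σt) σt := by
        have := (hasDerivAt_pow 2 σt).const_mul ((1/2) * τ2)
        exact this.congr_deriv (by ring)
      simpa using ((h2.const_add (ψt + (1/2) * (-1/θt) * (∑ i, (ut i)^2) + (1/2) * τ1 * (∑ j, ∑ k, (St j k)^2))).add_const ((1/2) * τ0 * (∑ i, (qt i)^2)))
    have hcomp : HasDerivAt (fun s => phat (a, psiVal τ0 τ1 τ2 ψt ut θt St s qt))
        (pPsi phat a b * (τ2 * σt)) σt := (hslot.comp σt hψ :)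
    have hlin : HasDerivAt (fun s : ℝ => a * ((∑ j, St 0 j * ut j) + s * ut 0 + qt 0))
        (a * ut 0) σt := by
      have h3 : HasDerivAt (fun s : ℝ => (∑ j, St 0 j * ut j) + s * ut 0 + qt 0) (ut 0) σt := by
        simpa using (((hasDerivAt_id σt).mul_const (ut 0)).const_add
          (∑ j, St 0 j * ut j)).add_const (qt 0)
      simpa using h3.const_mul a
    have := (hcomp.mul_const (ut 0)).add hlin
    exact this.congr_deriv (by ring)
  · intro k
    have hupdval : Function.update qt k (qt k) = qt := Function.update_eq_self k qt
    have hsum : HasDerivAt (fun s => ∑ i, (Function.update qt k s i)^2) (2 * qt k) (qt k) := by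
      have hterm : ∀ i ∈ Finset.univ, HasDerivAt
          (fun s => (Function.update qt k s i)^2)
          (if i = k then 2 * qt k else 0) (qt k) := by
        intro i _
        rcases eq_or_ne i k with h | h
        · subst h
          simp only [Function.update_self, if_pos rfl]
          simpa using hasDerivAt_pow 2 (qt i)
        · simp only [Function.update_of_ne h, if_neg h]
          exact hasDerivAt_const _ _
      have := HasDerivAt.fun_sum hterm
      simpa using this
    have hψq : HasDerivAt (fun s => psiVal τ0 τ1 τ2 ψt ut θt St σt (Function.update qt k s))
        (τ0 * qt k) (qt k) := by
      unfold psiVal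
      have h2 : HasDerivAt (fun s : ℝ => (1/2) * τ0 * (∑ i, (Function.update qt k s i)^2))
          (τ0 * qt k) (qt k) := by
        have := hsum.const_mul ((1/2) * τ0)
        exact this.congr_deriv (by ring)
      simpa using h2.const_add (ψt + (1/2) * (-1/θt) * (∑ i, (ut i)^2) + (1/2) * τ1 * (∑ j, ∑ k, (St j k)^2) + (1/2) * τ2 * σt^2)
    have hbval : psiVal τ0 τ1 τ2 ψt ut θt St σt (Function.update qt k (qt k)) = b := by
      rw [hupdval]
    have hslot' : HasDerivAt (fun x => phat (a, x)) (pPsi phat a b)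
        (psiVal τ0 τ1 τ2 ψt ut θt St σt (Function.update qt k (qt k))) := by
      rw [hbval]; exact hslot
    have hcomp : HasDerivAt
        (fun s => phat (a, psiVal τ0 τ1 τ2 ψt ut θt St σt (Function.update qt k s)))
        (pPsi phat a b * (τ0 * qt k)) (qt k) := (hslot'.comp (qt k) hψq :)
    have hlin : HasDerivAt
        (fun s : ℝ => a * ((∑ j, St 0 j * ut j) + σt * ut 0 + Function.update qt k s 0))
        (a * (if (0 : Fin 3) = k then 1 else 0)) (qt k) := by
      have h3 : HasDerivAt (fun s : ℝ => Function.update qt k s 0)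
          (if (0 : Fin 3) = k then 1 else 0) (qt k) := by
        rcases eq_or_ne (0 : Fin 3) k with h | h
        · subst h
          simp only [Function.update_self, if_pos rfl]
          exact hasDerivAt_id _
        · simp only [Function.update_of_ne h, if_neg h]
          exact hasDerivAt_const _ _
      simpa using (h3.const_add _).const_mul a
    have hfinal := (hcomp.mul_const (ut 0)).add hlin
    have heq : (fun s => X1 phat τ0 τ1 τ2 ψt ut θt St σt (Function.update qt k s)) =
        (fun s => phat (a, psiVal τ0 τ1 τ2 ψt ut θt St σt (Function.update qt k s)) * ut 0
          + a * ((∑ j, St 0 j * ut j) + σt * ut 0 + Function.update qt k s 0)) := by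
      funext s
      rfl
    rw [heq]
    exact hfinal.congr_deriv (by ring)

end
end

section
/- (Hessian of the temporal Godunov–Boillat potential at an equilibrium state.) Let Ῡ = (ψ̃₀, 0, θ̃₀, 0, 0, 0) be a state with ũ = 0, Σ̃ = 0, σ̃ = 0, q̃ = 0 and θ̃₀ < 0, and write θ = −1/θ̃₀, and p̂_θθ, p̂_θψ, p̂_ψψ for the second partial derivatives of p̂ evaluated at (θ, ψ̃₀). Then the second partial derivatives of X⁰ at Ῡ are: ∂²X⁰/∂ψ̃² = θ⁻¹p̂_ψψ; ∂²X⁰/∂ψ̃∂θ̃ = −p̂_ψ + θp̂_θψ; ∂²X⁰/∂θ̃² = θ³p̂_θθ; ∂²X⁰/∂ũ_j∂ũ_k = p̂_ψ δ_{jk}; ∂²X⁰/∂Σ̃_{jk}∂Σ̃_{lm} = τ₁θ⁻¹p̂_ψ δ_{jl}δ_{km}; ∂²X⁰/∂σ̃² = τ₂θ⁻¹p̂_ψ; ∂²X⁰/∂q̃_j∂q̃_k = τ₀θ⁻¹p̂_ψ δ_{jk}; and all mixed second partial derivatives between distinct blocks of variables other than the (ψ̃, θ̃) pair vanish at Ῡ.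 In particular the Hessian is block diagonal, with the blocks in the dissipative variables positive multiples of identity matrices. -/
noncomputable section

-- AUX (to be inserted after the pinned defs)
private lemma haux_quad0 (c b : ℝ) : HasDerivAt (fun t : ℝ => c + b * t ^ 2) 0 0 := by
  have := ((hasDerivAt_pow 2 (0:ℝ)).const_mul b).const_add c
  simpa using this

private lemma aux_inner_zero {G : ℝ → ℝ} {c : ℝ} (hG : DifferentiableAt ℝ G c) (b : ℝ) :
    deriv (fun t : ℝ => G (c + b * t ^ 2)) 0 = 0 := by
  have hGc : HasDerivAt G (deriv G c) (c + b * 0 ^ 2) := by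
    rw [show c + b * 0 ^ 2 = c by ring]; exact hG.hasDerivAt
  have h2 := hGc.comp 0 (haux_quad0 c b)
  have h3 : deriv (fun t : ℝ => G (c + b * t ^ 2)) 0 = deriv G c * 0 := h2.deriv
  rw [h3]; ring

private lemma aux_prod {G : ℝ → ℝ} {c : ℝ} (hG' : DifferentiableAt ℝ (deriv G) c) (b : ℝ) :
    deriv (fun s : ℝ => deriv G (c + b * s ^ 2) * (2 * b * s)) 0 = 2 * b * deriv G c := by
  have hGc' : HasDerivAt (deriv G) (deriv (deriv G) c) (c + b * 0 ^ 2) := by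
    rw [show c + b * 0 ^ 2 = c by ring]; exact hG'.hasDerivAt
  have hf : HasDerivAt (fun s : ℝ => deriv G (c + b * s ^ 2)) (deriv (deriv G) c * 0) 0 :=
    by have := hGc'.comp 0 (haux_quad0 c b); exact this
  have hg : HasDerivAt (fun s : ℝ => 2 * b * s) (2 * b) 0 := by
    simpa using (hasDerivAt_id (0:ℝ)).const_mul (2*b)
  have : deriv (fun s : ℝ => deriv G (c + b * s ^ 2) * (2 * b * s)) 0
      = deriv (deriv G) c * 0 * (2 * b * 0) + deriv G (c + b * 0 ^ 2) * (2 * b) :=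
    (hf.mul hg).deriv
  rw [this, show c + b * (0:ℝ) ^ 2 = c by ring]; ring

private lemma aux_diag_st {G : ℝ → ℝ} (hG : Differentiable ℝ G) {c : ℝ}
    (hG' : DifferentiableAt ℝ (deriv G) c) (b : ℝ) :
    deriv (fun s : ℝ => deriv (fun t : ℝ => G (c + b * (s + t) ^ 2)) 0) 0
      = 2 * b * deriv G c := by
  have key : ∀ s : ℝ, deriv (fun t : ℝ => G (c + b * (s + t) ^ 2)) 0
      = deriv G (c + b * s ^ 2) * (2 * b * s) := by
    intro s
    have h1 : HasDerivAt (fun t : ℝ => c + b * (s + t) ^ 2) (2 * b * s) 0 := by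
      have := ((((hasDerivAt_id (0:ℝ)).const_add s).pow 2).const_mul b).const_add c
      refine this.congr_deriv ?_
      simp only [id_eq]; push_cast; ring
    have hGc : HasDerivAt G (deriv G (c + b * s ^ 2)) (c + b * (s + 0) ^ 2) := by
      rw [show c + b * (s + 0) ^ 2 = c + b * s ^ 2 by ring]
      exact (hG _).hasDerivAt
    exact (hGc.comp 0 h1).deriv
  rw [funext key]
  exact aux_prod hG' b

private lemma aux_diag_t2 {G : ℝ → ℝ} (hG : Differentiable ℝ G) {c : ℝ}
    (hG' : DifferentiableAt ℝ (deriv G) c) (b : ℝ) :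
    deriv (fun s : ℝ => deriv (fun t : ℝ => G (c + b * t ^ 2)) s) 0
      = 2 * b * deriv G c := by
  have key : ∀ s : ℝ, deriv (fun t : ℝ => G (c + b * t ^ 2)) s
      = deriv G (c + b * s ^ 2) * (2 * b * s) := by
    intro s
    have h1 : HasDerivAt (fun t : ℝ => c + b * t ^ 2) (2 * b * s) s := by
      have := ((hasDerivAt_pow 2 s).const_mul b).const_add c
      refine this.congr_deriv ?_
      push_cast; ring
    have hGc : HasDerivAt G (deriv G (c + b * s ^ 2)) (c + b * s ^ 2) := (hG _).hasDerivAt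
    exact (hGc.comp s h1).deriv
  rw [funext key]
  exact aux_prod hG' b

private lemma sum_single_sq (j : Fin 3) (c : ℝ) :
    ∑ i, (Pi.single j c i) ^ 2 = c ^ 2 := by
  fin_cases j <;> simp [Fin.sum_univ_three, Pi.single_apply]

private lemma sum_single_add_sq (j k : Fin 3) (hjk : j ≠ k) (s t : ℝ) :
    ∑ i, ((Pi.single j s + Pi.single k t : Fin 3 → ℝ) i) ^ 2 = s ^ 2 + t ^ 2 := by
  fin_cases j <;> fin_cases k <;>
    simp_all [Fin.sum_univ_three, Pi.single_apply] <;> ring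

private lemma sum_std_sq (j k : Fin 3) (c : ℝ) :
    ∑ a, ∑ b, (Matrix.single j k c a b) ^ 2 = c ^ 2 := by
  fin_cases j <;> fin_cases k <;>
    simp [Fin.sum_univ_three, Matrix.single]

private lemma sum_std_add_sq (j k l m : Fin 3) (h : ¬(j = l ∧ k = m)) (s t : ℝ) :
    ∑ a, ∑ b, ((Matrix.single j k s + Matrix.single l m t) a b) ^ 2
      = s ^ 2 + t ^ 2 := by
  have expand : ∀ a b : Fin 3,
      ((Matrix.single j k s + Matrix.single l m t) a b) ^ 2
        = (Matrix.single j k s a b) ^ 2 + (Matrix.single l m t a b) ^ 2 := by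
    intro a b
    have hz : Matrix.single j k s a b * Matrix.single l m t a b = 0 := by
      by_cases h2 : l = a ∧ m = b
      · have h1 : ¬(j = a ∧ k = b) := fun hh =>
          h ⟨hh.1.trans h2.1.symm, hh.2.trans h2.2.symm⟩
        simp [Matrix.single, h1]
      · simp [Matrix.single, h2]
    rw [Matrix.add_apply, add_sq]
    rw [show 2 * Matrix.single j k s a b * Matrix.single l m t a b
        = 2 * (Matrix.single j k s a b * Matrix.single l m t a b) by ring, hz]
    ring
  simp only [expand, Finset.sum_add_distrib]
  rw [sum_std_sq, sum_std_sq]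

private lemma pPsi_eq {phat : ℝ × ℝ → ℝ} (hp : Differentiable ℝ phat) (a b : ℝ) :
    pPsi phat a b = fderiv ℝ phat (a, b) (0, 1) := by
  have h1 : HasDerivAt (fun s : ℝ => ((a, s) : ℝ × ℝ)) ((0 : ℝ), (1 : ℝ)) b :=
    (hasDerivAt_const b a).prodMk (hasDerivAt_id b)
  exact ((hp (a, b)).hasFDerivAt.comp_hasDerivAt b h1).deriv

private lemma pTheta_eq {phat : ℝ × ℝ → ℝ} (hp : Differentiable ℝ phat) (a b : ℝ) :
    pTheta phat a b = fderiv ℝ phat (a, b) (1, 0) := by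
  have h1 : HasDerivAt (fun t : ℝ => ((t, b) : ℝ × ℝ)) ((1 : ℝ), (0 : ℝ)) a :=
    (hasDerivAt_id a).prodMk (hasDerivAt_const a b)
  exact ((hp (a, b)).hasFDerivAt.comp_hasDerivAt a h1).deriv

/-- The slice function `y ↦ p̂(a, y)/a`. -/
def Gf (phat : ℝ × ℝ → ℝ) (a : ℝ) : ℝ → ℝ := fun y => phat (a, y) / a

private lemma X0_eq_Gf (phat : ℝ × ℝ → ℝ) {τ0 τ1 τ2 ψt θt σt : ℝ} {ut qt : Fin 3 → ℝ}
    {St : Matrix (Fin 3) (Fin 3) ℝ} {y : ℝ}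
    (hy : psiVal τ0 τ1 τ2 ψt ut θt St σt qt = y) :
    X0 phat τ0 τ1 τ2 ψt ut θt St σt qt = Gf phat (-1/θt) y := by
  unfold X0 Gf; rw [hy]

private lemma div_neginv (x s : ℝ) : x / (-1/s) = -(s * x) := by
  rcases eq_or_ne s 0 with rfl | h
  · simp
  · field_simp


/-- Hessian of the temporal Godunov–Boillat potential `X⁰` at an equilibrium
state `Ῡ = (ψ̃₀, 0, θ̃₀, 0, 0, 0)` with `θ̃₀ < 0`, `θ = -1/θ̃₀`:
`∂²X⁰/∂ψ̃² = θ⁻¹p̂_ψψ`, `∂²X⁰/∂ψ̃∂θ̃ = -p̂_ψ + θp̂_θψ`, `∂²X⁰/∂θ̃² = θ³p̂_θθ`,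
`∂²X⁰/∂ũ_j∂ũ_k = p̂_ψ δ_jk`, `∂²X⁰/∂Σ̃_{jk}∂Σ̃_{lm} = τ₁θ⁻¹p̂_ψ δ_jl δ_km`,
`∂²X⁰/∂σ̃² = τ₂θ⁻¹p̂_ψ`, `∂²X⁰/∂q̃_j∂q̃_k = τ₀θ⁻¹p̂_ψ δ_jk`, and all mixed second
partials between distinct blocks other than the `(ψ̃, θ̃)` pair vanish. -/
theorem X0_hessian_at_equilibrium
    (phat : ℝ × ℝ → ℝ) (hp : ContDiff ℝ 2 phat)
    (τ0 τ1 τ2 : ℝ) (hτ0 : 0 < τ0) (hτ1 : 0 < τ1) (hτ2 : 0 < τ2)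
    (ψ0 θ0 : ℝ) (hθ0 : θ0 < 0) :
    -- ∂²X⁰/∂ψ̃² = θ⁻¹ p̂_ψψ
    deriv (fun s : ℝ => deriv (fun t : ℝ => X0 phat τ0 τ1 τ2 t 0 θ0 0 0 0) s) ψ0
      = (-1/θ0)⁻¹ * deriv (fun s => pPsi phat (-1/θ0) s) ψ0
    -- ∂²X⁰/∂ψ̃∂θ̃ = -p̂_ψ + θ p̂_θψ
    ∧ deriv (fun s : ℝ => deriv (fun t : ℝ => X0 phat τ0 τ1 τ2 t 0 s 0 0 0) ψ0) θ0
      = -pPsi phat (-1/θ0) ψ0 + (-1/θ0) * deriv (fun a => pPsi phat a ψ0) (-1/θ0)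
    -- ∂²X⁰/∂θ̃² = θ³ p̂_θθ
    ∧ deriv (fun s : ℝ => deriv (fun t : ℝ => X0 phat τ0 τ1 τ2 ψ0 0 t 0 0 0) s) θ0
      = (-1/θ0)^3 * deriv (fun a => pTheta phat a ψ0) (-1/θ0)
    -- ∂²X⁰/∂ũ_j∂ũ_k = p̂_ψ δ_jk
    ∧ (∀ j k : Fin 3,
        deriv (fun s : ℝ => deriv (fun t : ℝ => X0 phat τ0 τ1 τ2 ψ0
            (Pi.single j s + Pi.single k t) θ0 0 0 0) 0) 0
          = pPsi phat (-1/θ0) ψ0 * (if j = k then 1 else 0))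
    -- ∂²X⁰/∂Σ̃_{jk}∂Σ̃_{lm} = τ₁θ⁻¹p̂_ψ δ_jl δ_km
    ∧ (∀ j k l m : Fin 3,
        deriv (fun s : ℝ => deriv (fun t : ℝ => X0 phat τ0 τ1 τ2 ψ0 0 θ0
            (Matrix.single j k s + Matrix.single l m t) 0 0) 0) 0
          = τ1 * (-1/θ0)⁻¹ * pPsi phat (-1/θ0) ψ0
              * ((if j = l then 1 else 0) * (if k = m then 1 else 0)))
    -- ∂²X⁰/∂σ̃² = τ₂θ⁻¹p̂_ψ
    ∧ deriv (fun s : ℝ => deriv (fun t : ℝ => X0 phat τ0 τ1 τ2 ψ0 0 θ0 0 t 0) s) 0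
        = τ2 * (-1/θ0)⁻¹ * pPsi phat (-1/θ0) ψ0
    -- ∂²X⁰/∂q̃_j∂q̃_k = τ₀θ⁻¹p̂_ψ δ_jk
    ∧ (∀ j k : Fin 3,
        deriv (fun s : ℝ => deriv (fun t : ℝ => X0 phat τ0 τ1 τ2 ψ0 0 θ0 0 0
            (Pi.single j s + Pi.single k t)) 0) 0
          = τ0 * (-1/θ0)⁻¹ * pPsi phat (-1/θ0) ψ0 * (if j = k then 1 else 0))
    -- mixed ψ̃–ũ
    ∧ (∀ k : Fin 3,
        deriv (fun s : ℝ => deriv (fun t : ℝ => X0 phat τ0 τ1 τ2 s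
            (Pi.single k t) θ0 0 0 0) 0) ψ0 = 0)
    -- mixed ψ̃–Σ̃
    ∧ (∀ k l : Fin 3,
        deriv (fun s : ℝ => deriv (fun t : ℝ => X0 phat τ0 τ1 τ2 s 0 θ0
            (Matrix.single k l t) 0 0) 0) ψ0 = 0)
    -- mixed ψ̃–σ̃
    ∧ deriv (fun s : ℝ => deriv (fun t : ℝ => X0 phat τ0 τ1 τ2 s 0 θ0 0 t 0) 0) ψ0 = 0
    -- mixed ψ̃–q̃
    ∧ (∀ k : Fin 3,
        deriv (fun s : ℝ => deriv (fun t : ℝ => X0 phat τ0 τ1 τ2 s 0 θ0 0 0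
            (Pi.single k t)) 0) ψ0 = 0)
    -- mixed θ̃–ũ
    ∧ (∀ k : Fin 3,
        deriv (fun s : ℝ => deriv (fun t : ℝ => X0 phat τ0 τ1 τ2 ψ0
            (Pi.single k t) s 0 0 0) 0) θ0 = 0)
    -- mixed θ̃–Σ̃
    ∧ (∀ k l : Fin 3,
        deriv (fun s : ℝ => deriv (fun t : ℝ => X0 phat τ0 τ1 τ2 ψ0 0 s
            (Matrix.single k l t) 0 0) 0) θ0 = 0)
    -- mixed θ̃–σ̃
    ∧ deriv (fun s : ℝ => deriv (fun t : ℝ => X0 phat τ0 τ1 τ2 ψ0 0 s 0 t 0) 0) θ0 = 0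
    -- mixed θ̃–q̃
    ∧ (∀ k : Fin 3,
        deriv (fun s : ℝ => deriv (fun t : ℝ => X0 phat τ0 τ1 τ2 ψ0 0 s 0 0
            (Pi.single k t)) 0) θ0 = 0)
    -- mixed ũ–Σ̃
    ∧ (∀ j k l : Fin 3,
        deriv (fun s : ℝ => deriv (fun t : ℝ => X0 phat τ0 τ1 τ2 ψ0
            (Pi.single j s) θ0 (Matrix.single k l t) 0 0) 0) 0 = 0)
    -- mixed ũ–σ̃
    ∧ (∀ j : Fin 3,
        deriv (fun s : ℝ => deriv (fun t : ℝ => X0 phat τ0 τ1 τ2 ψ0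
            (Pi.single j s) θ0 0 t 0) 0) 0 = 0)
    -- mixed ũ–q̃
    ∧ (∀ j k : Fin 3,
        deriv (fun s : ℝ => deriv (fun t : ℝ => X0 phat τ0 τ1 τ2 ψ0
            (Pi.single j s) θ0 0 0 (Pi.single k t)) 0) 0 = 0)
    -- mixed Σ̃–σ̃
    ∧ (∀ k l : Fin 3,
        deriv (fun s : ℝ => deriv (fun t : ℝ => X0 phat τ0 τ1 τ2 ψ0 0 θ0
            (Matrix.single k l s) t 0) 0) 0 = 0)
    -- mixed Σ̃–q̃
    ∧ (∀ k l m : Fin 3,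
        deriv (fun s : ℝ => deriv (fun t : ℝ => X0 phat τ0 τ1 τ2 ψ0 0 θ0
            (Matrix.single k l s) 0 (Pi.single m t)) 0) 0 = 0)
    -- mixed σ̃–q̃
    ∧ (∀ k : Fin 3,
        deriv (fun s : ℝ => deriv (fun t : ℝ => X0 phat τ0 τ1 τ2 ψ0 0 θ0 0 s
            (Pi.single k t)) 0) 0 = 0) := by
  have hne : θ0 ≠ 0 := ne_of_lt hθ0
  have hpd : Differentiable ℝ phat := hp.differentiable (by norm_num)
  have hP2 : ContDiff ℝ 1 (fun x : ℝ × ℝ => fderiv ℝ phat x (0, 1)) :=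
    (hp.fderiv_right (by norm_num)).clm_apply contDiff_const
  have hP1 : ContDiff ℝ 1 (fun x : ℝ × ℝ => fderiv ℝ phat x (1, 0)) :=
    (hp.fderiv_right (by norm_num)).clm_apply contDiff_const
  have hGdiff : ∀ a : ℝ, Differentiable ℝ (Gf phat a) := fun a =>
    (hpd.comp ((differentiable_const a).prodMk differentiable_id)).div_const a
  have hderivG : ∀ (a : ℝ) (y : ℝ), deriv (Gf phat a) y = pPsi phat a y / a := by
    intro a y; exact deriv_div_const _
  have hG' : ∀ (a : ℝ) (c : ℝ), DifferentiableAt ℝ (deriv (Gf phat a)) c := by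
    intro a c
    have : deriv (Gf phat a) = fun y => fderiv ℝ phat (a, y) (0, 1) / a :=
      funext fun y => by rw [hderivG, pPsi_eq hpd]
    rw [this]
    exact (((hP2.differentiable one_ne_zero).comp
      ((differentiable_const a).prodMk differentiable_id)).div_const a) c
  have hK : Differentiable ℝ (fun a => pPsi phat a ψ0) := by
    have : (fun a => pPsi phat a ψ0) = fun a => fderiv ℝ phat (a, ψ0) (0, 1) :=
      funext fun a => pPsi_eq hpd a ψ0
    rw [this]
    exact (hP2.differentiable one_ne_zero).comp (differentiable_id.prodMk (differentiable_const ψ0))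
  have hK1 : Differentiable ℝ (fun a => pTheta phat a ψ0) := by
    have : (fun a => pTheta phat a ψ0) = fun a => fderiv ℝ phat (a, ψ0) (1, 0) :=
      funext fun a => pTheta_eq hpd a ψ0
    rw [this]
    exact (hP1.differentiable one_ne_zero).comp (differentiable_id.prodMk (differentiable_const ψ0))
  have hQd : Differentiable ℝ (fun a : ℝ => phat (a, ψ0)) :=
    hpd.comp (differentiable_id.prodMk (differentiable_const ψ0))
  have hinvs : ∀ s : ℝ, s ≠ 0 → HasDerivAt (fun t : ℝ => -1/t) (1/s^2) s := by
    intro s hs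
    have h := (hasDerivAt_inv hs).neg
    have he : (fun t : ℝ => -1/t) = (fun t : ℝ => -(t⁻¹)) := by
      funext t; rw [neg_div, one_div]
    rw [he, show (1:ℝ)/s^2 = -(-(s^2)⁻¹) by rw [one_div]; ring]
    exact h
  have hinv := hinvs θ0 hne
  refine ⟨?_, ?_, ?_, ?_, ?_, ?_, ?_, ?_, ?_, ?_, ?_, ?_, ?_, ?_, ?_, ?_, ?_, ?_, ?_, ?_, ?_⟩
  -- 1: ψψ
  · have hXeq : ∀ t : ℝ, X0 phat τ0 τ1 τ2 t 0 θ0 0 0 0 = Gf phat (-1/θ0) t :=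
      fun t => X0_eq_Gf phat (by simp [psiVal])
    simp only [hXeq]
    simp only [hderivG]
    rw [deriv_div_const, div_eq_inv_mul]
  -- 2: ψθ
  · have hXeq : ∀ (s t : ℝ), X0 phat τ0 τ1 τ2 t 0 s 0 0 0 = Gf phat (-1/s) t :=
      fun s t => X0_eq_Gf phat (by simp [psiVal])
    have houter : (fun s : ℝ => deriv (fun t : ℝ => X0 phat τ0 τ1 τ2 t 0 s 0 0 0) ψ0)
        = fun s : ℝ => -(s * pPsi phat (-1/s) ψ0) := by
      funext s
      simp only [hXeq]
      rw [hderivG, div_neginv]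
    rw [houter]
    have hcomp : HasDerivAt (fun s : ℝ => pPsi phat (-1/s) ψ0)
        (deriv (fun a => pPsi phat a ψ0) (-1/θ0) * (1/θ0^2)) θ0 :=
      (hK (-1/θ0)).hasDerivAt.comp θ0 hinv
    have hmul : HasDerivAt (fun s : ℝ => -(s * pPsi phat (-1/s) ψ0))
        (-(1 * pPsi phat (-1/θ0) ψ0
          + θ0 * (deriv (fun a => pPsi phat a ψ0) (-1/θ0) * (1/θ0^2)))) θ0 :=
      ((hasDerivAt_id θ0).mul hcomp).neg
    rw [hmul.deriv]
    field_simp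
    ring
  -- 3: θθ
  · have hXeq : ∀ t : ℝ, X0 phat τ0 τ1 τ2 ψ0 0 t 0 0 0 = -(t * phat (-1/t, ψ0)) := by
      intro t
      rw [X0_eq_Gf phat (show psiVal τ0 τ1 τ2 ψ0 0 t 0 0 0 = ψ0 by simp [psiVal])]
      exact div_neginv _ _
    have hev : (fun s : ℝ => deriv (fun t : ℝ => X0 phat τ0 τ1 τ2 ψ0 0 t 0 0 0) s)
        =ᶠ[nhds θ0] (fun s : ℝ => -(phat (-1/s, ψ0) + pTheta phat (-1/s) ψ0 * s⁻¹)) := by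
      filter_upwards [compl_singleton_mem_nhds hne] with s hs
      have hs0 : s ≠ 0 := hs
      have hc : HasDerivAt (fun t : ℝ => phat (-1/t, ψ0))
          (pTheta phat (-1/s) ψ0 * (1/s^2)) s :=
        (hQd (-1/s)).hasDerivAt.comp s (hinvs s hs0)
      have hmul : HasDerivAt (fun t : ℝ => -(t * phat (-1/t, ψ0)))
          (-(1 * phat (-1/s, ψ0) + s * (pTheta phat (-1/s) ψ0 * (1/s^2)))) s :=
        ((hasDerivAt_id s).mul hc).neg
      rw [funext hXeq, hmul.deriv]
      field_simp
    rw [hev.deriv_eq]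
    have hc0 : HasDerivAt (fun s : ℝ => phat (-1/s, ψ0))
        (pTheta phat (-1/θ0) ψ0 * (1/θ0^2)) θ0 :=
      (hQd (-1/θ0)).hasDerivAt.comp θ0 hinv
    have hc1 : HasDerivAt (fun s : ℝ => pTheta phat (-1/s) ψ0)
        (deriv (fun a => pTheta phat a ψ0) (-1/θ0) * (1/θ0^2)) θ0 :=
      (hK1 (-1/θ0)).hasDerivAt.comp θ0 hinv
    have hc2 : HasDerivAt (fun s : ℝ => s⁻¹) (-(θ0^2)⁻¹) θ0 := hasDerivAt_inv hne
    have htot : HasDerivAt (fun s : ℝ => -(phat (-1/s, ψ0) + pTheta phat (-1/s) ψ0 * s⁻¹))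
        (-(pTheta phat (-1/θ0) ψ0 * (1/θ0^2)
          + (deriv (fun a => pTheta phat a ψ0) (-1/θ0) * (1/θ0^2) * θ0⁻¹
            + pTheta phat (-1/θ0) ψ0 * -(θ0^2)⁻¹))) θ0 :=
      (hc0.add (hc1.mul hc2)).neg
    rw [htot.deriv]
    field_simp
    ring
  -- 4: uu
  · intro j k
    by_cases hjk : j = k
    · subst hjk
      have hXeq : ∀ s t : ℝ, X0 phat τ0 τ1 τ2 ψ0 (Pi.single j s + Pi.single j t) θ0 0 0 0
          = Gf phat (-1/θ0) (ψ0 + 1/2 * (-1/θ0) * (s + t) ^ 2) := by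
        intro s t
        exact X0_eq_Gf phat (by rw [← Pi.single_add]; simp [psiVal, sum_single_sq])
      simp only [hXeq]
      rw [aux_diag_st (hGdiff _) (hG' _ ψ0) (1/2 * (-1/θ0)), hderivG]
      simp only [if_true, mul_one]
      field_simp
    · have hXeq : ∀ s t : ℝ, X0 phat τ0 τ1 τ2 ψ0 (Pi.single j s + Pi.single k t) θ0 0 0 0
          = Gf phat (-1/θ0) (ψ0 + 1/2 * (-1/θ0) * s ^ 2 + 1/2 * (-1/θ0) * t ^ 2) := by
        intro s t
        refine X0_eq_Gf phat ?_
        simp only [psiVal, sum_single_add_sq j k hjk, Matrix.zero_apply, Pi.zero_apply,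
          ne_eq, OfNat.ofNat_ne_zero, not_false_eq_true, zero_pow, Finset.sum_const_zero,
          mul_zero, add_zero]
        ring
      have hin : ∀ s : ℝ, deriv (fun t : ℝ =>
          Gf phat (-1/θ0) (ψ0 + 1/2 * (-1/θ0) * s ^ 2 + 1/2 * (-1/θ0) * t ^ 2)) 0 = 0 :=
        fun s => aux_inner_zero ((hGdiff (-1/θ0)) _) _
      simp only [hXeq, hin, if_neg hjk, mul_zero]
      exact deriv_const _ _
  -- 5: ΣΣ
  · intro j k l m
    by_cases h : j = l ∧ k = m
    · obtain ⟨rfl, rfl⟩ := h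
      have hXeq : ∀ s t : ℝ, X0 phat τ0 τ1 τ2 ψ0 0 θ0
          (Matrix.single j k s + Matrix.single j k t) 0 0
          = Gf phat (-1/θ0) (ψ0 + 1/2 * τ1 * (s + t) ^ 2) := by
        intro s t
        exact X0_eq_Gf phat
          (by rw [← Matrix.single_add]; simp [psiVal, sum_std_sq])
      simp only [hXeq]
      rw [aux_diag_st (hGdiff _) (hG' _ ψ0) (1/2 * τ1), hderivG]
      simp only [if_true, mul_one]
      field_simp
    · have hXeq : ∀ s t : ℝ, X0 phat τ0 τ1 τ2 ψ0 0 θ0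
          (Matrix.single j k s + Matrix.single l m t) 0 0
          = Gf phat (-1/θ0) (ψ0 + 1/2 * τ1 * s ^ 2 + 1/2 * τ1 * t ^ 2) := by
        intro s t
        refine X0_eq_Gf phat ?_
        simp only [psiVal, sum_std_add_sq j k l m h, Matrix.zero_apply, Pi.zero_apply,
          ne_eq, OfNat.ofNat_ne_zero, not_false_eq_true, zero_pow, Finset.sum_const_zero,
          mul_zero, add_zero]
        ring
      have hin : ∀ s : ℝ, deriv (fun t : ℝ =>
          Gf phat (-1/θ0) (ψ0 + 1/2 * τ1 * s ^ 2 + 1/2 * τ1 * t ^ 2)) 0 = 0 :=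
        fun s => aux_inner_zero ((hGdiff (-1/θ0)) _) _
      simp only [hXeq, hin]
      rw [deriv_const]
      rcases not_and_or.mp h with h' | h' <;> simp [h']
  -- 6: σσ
  · have hXeq : ∀ t : ℝ, X0 phat τ0 τ1 τ2 ψ0 0 θ0 0 t 0
        = Gf phat (-1/θ0) (ψ0 + 1/2 * τ2 * t ^ 2) :=
      fun t => X0_eq_Gf phat (by simp [psiVal])
    simp only [hXeq]
    rw [aux_diag_t2 (hGdiff _) (hG' _ ψ0) (1/2 * τ2), hderivG]
    field_simp
  -- 7: qq
  · intro j k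
    by_cases hjk : j = k
    · subst hjk
      have hXeq : ∀ s t : ℝ, X0 phat τ0 τ1 τ2 ψ0 0 θ0 0 0 (Pi.single j s + Pi.single j t)
          = Gf phat (-1/θ0) (ψ0 + 1/2 * τ0 * (s + t) ^ 2) := by
        intro s t
        exact X0_eq_Gf phat (by rw [← Pi.single_add]; simp [psiVal, sum_single_sq])
      simp only [hXeq]
      rw [aux_diag_st (hGdiff _) (hG' _ ψ0) (1/2 * τ0), hderivG]
      simp only [if_true, mul_one]
      field_simp
    · have hXeq : ∀ s t : ℝ, X0 phat τ0 τ1 τ2 ψ0 0 θ0 0 0 (Pi.single j s + Pi.single k t)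
          = Gf phat (-1/θ0) (ψ0 + 1/2 * τ0 * s ^ 2 + 1/2 * τ0 * t ^ 2) := by
        intro s t
        refine X0_eq_Gf phat ?_
        simp only [psiVal, sum_single_add_sq j k hjk, Matrix.zero_apply, Pi.zero_apply,
          ne_eq, OfNat.ofNat_ne_zero, not_false_eq_true, zero_pow, Finset.sum_const_zero,
          mul_zero, add_zero]
        ring
      have hin : ∀ s : ℝ, deriv (fun t : ℝ =>
          Gf phat (-1/θ0) (ψ0 + 1/2 * τ0 * s ^ 2 + 1/2 * τ0 * t ^ 2)) 0 = 0 :=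
        fun s => aux_inner_zero ((hGdiff (-1/θ0)) _) _
      simp only [hXeq, hin, if_neg hjk, mul_zero]
      exact deriv_const _ _
  -- 8: ψu
  · intro k
    have hXeq : ∀ s t : ℝ, X0 phat τ0 τ1 τ2 s (Pi.single k t) θ0 0 0 0
        = Gf phat (-1/θ0) (s + 1/2 * (-1/θ0) * t ^ 2) :=
      fun s t => X0_eq_Gf phat (by simp [psiVal, sum_single_sq])
    have hin : ∀ s : ℝ, deriv (fun t : ℝ =>
        Gf phat (-1/θ0) (s + 1/2 * (-1/θ0) * t ^ 2)) 0 = 0 :=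
      fun s => aux_inner_zero ((hGdiff (-1/θ0)) _) _
    simp only [hXeq, hin]
    exact deriv_const _ _
  -- 9: ψΣ
  · intro k l
    have hXeq : ∀ s t : ℝ, X0 phat τ0 τ1 τ2 s 0 θ0 (Matrix.single k l t) 0 0
        = Gf phat (-1/θ0) (s + 1/2 * τ1 * t ^ 2) :=
      fun s t => X0_eq_Gf phat (by simp [psiVal, sum_std_sq])
    have hin : ∀ s : ℝ, deriv (fun t : ℝ =>
        Gf phat (-1/θ0) (s + 1/2 * τ1 * t ^ 2)) 0 = 0 :=
      fun s => aux_inner_zero ((hGdiff (-1/θ0)) _) _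
    simp only [hXeq, hin]
    exact deriv_const _ _
  -- 10: ψσ
  · have hXeq : ∀ s t : ℝ, X0 phat τ0 τ1 τ2 s 0 θ0 0 t 0
        = Gf phat (-1/θ0) (s + 1/2 * τ2 * t ^ 2) :=
      fun s t => X0_eq_Gf phat (by simp [psiVal])
    have hin : ∀ s : ℝ, deriv (fun t : ℝ =>
        Gf phat (-1/θ0) (s + 1/2 * τ2 * t ^ 2)) 0 = 0 :=
      fun s => aux_inner_zero ((hGdiff (-1/θ0)) _) _
    simp only [hXeq, hin]
    exact deriv_const _ _
  -- 11: ψq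
  · intro k
    have hXeq : ∀ s t : ℝ, X0 phat τ0 τ1 τ2 s 0 θ0 0 0 (Pi.single k t)
        = Gf phat (-1/θ0) (s + 1/2 * τ0 * t ^ 2) :=
      fun s t => X0_eq_Gf phat (by simp [psiVal, sum_single_sq])
    have hin : ∀ s : ℝ, deriv (fun t : ℝ =>
        Gf phat (-1/θ0) (s + 1/2 * τ0 * t ^ 2)) 0 = 0 :=
      fun s => aux_inner_zero ((hGdiff (-1/θ0)) _) _
    simp only [hXeq, hin]
    exact deriv_const _ _
  -- 12: θu
  · intro k
    have hXeq : ∀ s t : ℝ, X0 phat τ0 τ1 τ2 ψ0 (Pi.single k t) s 0 0 0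
        = Gf phat (-1/s) (ψ0 + 1/2 * (-1/s) * t ^ 2) :=
      fun s t => X0_eq_Gf phat (by simp [psiVal, sum_single_sq])
    have hin : ∀ s : ℝ, deriv (fun t : ℝ =>
        Gf phat (-1/s) (ψ0 + 1/2 * (-1/s) * t ^ 2)) 0 = 0 :=
      fun s => aux_inner_zero ((hGdiff (-1/s)) _) _
    simp only [hXeq, hin]
    exact deriv_const _ _
  -- 13: θΣ
  · intro k l
    have hXeq : ∀ s t : ℝ, X0 phat τ0 τ1 τ2 ψ0 0 s (Matrix.single k l t) 0 0
        = Gf phat (-1/s) (ψ0 + 1/2 * τ1 * t ^ 2) :=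
      fun s t => X0_eq_Gf phat (by simp [psiVal, sum_std_sq])
    have hin : ∀ s : ℝ, deriv (fun t : ℝ =>
        Gf phat (-1/s) (ψ0 + 1/2 * τ1 * t ^ 2)) 0 = 0 :=
      fun s => aux_inner_zero ((hGdiff (-1/s)) _) _
    simp only [hXeq, hin]
    exact deriv_const _ _
  -- 14: θσ
  · have hXeq : ∀ s t : ℝ, X0 phat τ0 τ1 τ2 ψ0 0 s 0 t 0
        = Gf phat (-1/s) (ψ0 + 1/2 * τ2 * t ^ 2) :=
      fun s t => X0_eq_Gf phat (by simp [psiVal])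
    have hin : ∀ s : ℝ, deriv (fun t : ℝ =>
        Gf phat (-1/s) (ψ0 + 1/2 * τ2 * t ^ 2)) 0 = 0 :=
      fun s => aux_inner_zero ((hGdiff (-1/s)) _) _
    simp only [hXeq, hin]
    exact deriv_const _ _
  -- 15: θq
  · intro k
    have hXeq : ∀ s t : ℝ, X0 phat τ0 τ1 τ2 ψ0 0 s 0 0 (Pi.single k t)
        = Gf phat (-1/s) (ψ0 + 1/2 * τ0 * t ^ 2) :=
      fun s t => X0_eq_Gf phat (by simp [psiVal, sum_single_sq])
    have hin : ∀ s : ℝ, deriv (fun t : ℝ =>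
        Gf phat (-1/s) (ψ0 + 1/2 * τ0 * t ^ 2)) 0 = 0 :=
      fun s => aux_inner_zero ((hGdiff (-1/s)) _) _
    simp only [hXeq, hin]
    exact deriv_const _ _
  -- 16: uΣ
  · intro j k l
    have hXeq : ∀ s t : ℝ, X0 phat τ0 τ1 τ2 ψ0 (Pi.single j s) θ0
        (Matrix.single k l t) 0 0
        = Gf phat (-1/θ0) (ψ0 + 1/2 * (-1/θ0) * s ^ 2 + 1/2 * τ1 * t ^ 2) :=
      fun s t => X0_eq_Gf phat (by simp [psiVal, sum_single_sq, sum_std_sq])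
    have hin : ∀ s : ℝ, deriv (fun t : ℝ =>
        Gf phat (-1/θ0) (ψ0 + 1/2 * (-1/θ0) * s ^ 2 + 1/2 * τ1 * t ^ 2)) 0 = 0 :=
      fun s => aux_inner_zero ((hGdiff (-1/θ0)) _) _
    simp only [hXeq, hin]
    exact deriv_const _ _
  -- 17: uσ
  · intro j
    have hXeq : ∀ s t : ℝ, X0 phat τ0 τ1 τ2 ψ0 (Pi.single j s) θ0 0 t 0
        = Gf phat (-1/θ0) (ψ0 + 1/2 * (-1/θ0) * s ^ 2 + 1/2 * τ2 * t ^ 2) :=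
      fun s t => X0_eq_Gf phat (by simp [psiVal, sum_single_sq])
    have hin : ∀ s : ℝ, deriv (fun t : ℝ =>
        Gf phat (-1/θ0) (ψ0 + 1/2 * (-1/θ0) * s ^ 2 + 1/2 * τ2 * t ^ 2)) 0 = 0 :=
      fun s => aux_inner_zero ((hGdiff (-1/θ0)) _) _
    simp only [hXeq, hin]
    exact deriv_const _ _
  -- 18: uq
  · intro j k
    have hXeq : ∀ s t : ℝ, X0 phat τ0 τ1 τ2 ψ0 (Pi.single j s) θ0 0 0 (Pi.single k t)
        = Gf phat (-1/θ0) (ψ0 + 1/2 * (-1/θ0) * s ^ 2 + 1/2 * τ0 * t ^ 2) :=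
      fun s t => X0_eq_Gf phat (by simp [psiVal, sum_single_sq])
    have hin : ∀ s : ℝ, deriv (fun t : ℝ =>
        Gf phat (-1/θ0) (ψ0 + 1/2 * (-1/θ0) * s ^ 2 + 1/2 * τ0 * t ^ 2)) 0 = 0 :=
      fun s => aux_inner_zero ((hGdiff (-1/θ0)) _) _
    simp only [hXeq, hin]
    exact deriv_const _ _
  -- 19: Σσ
  · intro k l
    have hXeq : ∀ s t : ℝ, X0 phat τ0 τ1 τ2 ψ0 0 θ0 (Matrix.single k l s) t 0
        = Gf phat (-1/θ0) (ψ0 + 1/2 * τ1 * s ^ 2 + 1/2 * τ2 * t ^ 2) :=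
      fun s t => X0_eq_Gf phat (by simp [psiVal, sum_std_sq])
    have hin : ∀ s : ℝ, deriv (fun t : ℝ =>
        Gf phat (-1/θ0) (ψ0 + 1/2 * τ1 * s ^ 2 + 1/2 * τ2 * t ^ 2)) 0 = 0 :=
      fun s => aux_inner_zero ((hGdiff (-1/θ0)) _) _
    simp only [hXeq, hin]
    exact deriv_const _ _
  -- 20: Σq
  · intro k l m
    have hXeq : ∀ s t : ℝ, X0 phat τ0 τ1 τ2 ψ0 0 θ0 (Matrix.single k l s) 0
        (Pi.single m t)
        = Gf phat (-1/θ0) (ψ0 + 1/2 * τ1 * s ^ 2 + 1/2 * τ0 * t ^ 2) :=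
      fun s t => X0_eq_Gf phat (by simp [psiVal, sum_std_sq, sum_single_sq])
    have hin : ∀ s : ℝ, deriv (fun t : ℝ =>
        Gf phat (-1/θ0) (ψ0 + 1/2 * τ1 * s ^ 2 + 1/2 * τ0 * t ^ 2)) 0 = 0 :=
      fun s => aux_inner_zero ((hGdiff (-1/θ0)) _) _
    simp only [hXeq, hin]
    exact deriv_const _ _
  -- 21: σq
  · intro k
    have hXeq : ∀ s t : ℝ, X0 phat τ0 τ1 τ2 ψ0 0 θ0 0 s (Pi.single k t)
        = Gf phat (-1/θ0) (ψ0 + 1/2 * τ2 * s ^ 2 + 1/2 * τ0 * t ^ 2) :=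
      fun s t => X0_eq_Gf phat (by simp [psiVal, sum_single_sq])
    have hin : ∀ s : ℝ, deriv (fun t : ℝ =>
        Gf phat (-1/θ0) (ψ0 + 1/2 * τ2 * s ^ 2 + 1/2 * τ0 * t ^ 2)) 0 = 0 :=
      fun s => aux_inner_zero ((hGdiff (-1/θ0)) _) _
    simp only [hXeq, hin]
    exact deriv_const _ _

end
end
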